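/- arXiv:2306.08812 — 2 statements merged into one kernel-verified Lean document; each statement's English description precedes it below -/
import Mathlib

section
/- Let Ω: ℝ^p → ℝ be σ-strongly convex (σ > 0), f: ℝ^p → ℝ be μ-strongly convex (μ ≥ 0), both with L-Lipschitz Hessians, and let x_Ω = argmin Ω. Define x₀ = x_Ω − (∇²f(x_Ω) + λ_max∇²Ω(x_Ω))⁻¹∇f(x_Ω). Then ‖∇f(x₀) + λ_max∇Ω(x₀)‖ ≤ L(1 + λ_max)‖∇f(x_Ω)‖² / (2(μ + λ_max σ)²). -/
set_option maxHeartbeats 1000000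


/-- Euclidean space ℝ^p. -/
abbrev Euc (p : ℕ) := EuclideanSpace ℝ (Fin p)

/-- Initialization guarantee: with x_Ω = argmin Ω (so ∇Ω(x_Ω) = 0) and the Newton step
x₀ = x_Ω − (∇²f(x_Ω) + λ_max∇²Ω(x_Ω))⁻¹∇f(x_Ω), we have
‖∇f(x₀) + λ_max∇Ω(x₀)‖ ≤ L(1+λ_max)‖∇f(x_Ω)‖² / (2(μ + λ_max σ)²). -/
theorem stmt_15 {p : ℕ} {L μ σ lammax : ℝ}
    (hμ : 0 ≤ μ) (hσ : 0 < σ) (hlammax : 0 < lammax)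
    (f Ω : Euc p → ℝ) (gf gΩ : Euc p → Euc p) (Hf HΩ : Euc p → (Euc p →L[ℝ] Euc p))
    (hgf : ∀ x, HasGradientAt f (gf x) x) (hgΩ : ∀ x, HasGradientAt Ω (gΩ x) x)
    (hHf : ∀ x, HasFDerivAt gf (Hf x) x) (hHΩ : ∀ x, HasFDerivAt gΩ (HΩ x) x)
    (hLipHf : ∀ x y, ‖Hf x - Hf y‖ ≤ L * ‖x - y‖)
    (hLipHΩ : ∀ x y, ‖HΩ x - HΩ y‖ ≤ L * ‖x - y‖)
    (hscf : ∀ x v, μ * ‖v‖ ^ 2 ≤ @inner ℝ _ _ v (Hf x v))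
    (hscΩ : ∀ x v, σ * ‖v‖ ^ 2 ≤ @inner ℝ _ _ v (HΩ x v))
    (xΩ : Euc p) (hmin : IsMinOn Ω Set.univ xΩ)
    (x₀ : Euc p)
    (hx₀ : (Hf xΩ + lammax • HΩ xΩ) (x₀ - xΩ) = -(gf xΩ)) :
    ‖gf x₀ + lammax • gΩ x₀‖
      ≤ L * (1 + lammax) * ‖gf xΩ‖ ^ 2 / (2 * (μ + lammax * σ) ^ 2) := by
  set M : ℝ := L * (1 + lammax) with hM
  set m : ℝ := μ + lammax * σ with hm
  have hm0 : 0 < m := by positivity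
  set G : Euc p → Euc p := fun x => gf x + lammax • gΩ x with hG
  set H : Euc p → (Euc p →L[ℝ] Euc p) := fun x => Hf x + lammax • HΩ x with hHdef
  set v : Euc p := x₀ - xΩ with hv
  -- gradient of Ω vanishes at the minimizer
  have hgΩ0 : gΩ xΩ = 0 := by
    have hloc : IsLocalMin Ω xΩ := hmin.isLocalMin Filter.univ_mem
    have h0 := hloc.hasFDerivAt_eq_zero
      ((hasGradientAt_iff_hasFDerivAt).1 (hgΩ xΩ))
    have := congrArg (InnerProductSpace.toDual ℝ (Euc p)).symm h0
    simpa using this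
  -- derivative of G
  have hHG : ∀ x, HasFDerivAt G (H x) x := fun x =>
    (hHf x).add ((hHΩ x).const_smul lammax)
  -- Lipschitz bound for H
  have hLipH : ∀ x y, ‖H x - H y‖ ≤ M * ‖x - y‖ := by
    intro x y
    have heq : H x - H y = (Hf x - Hf y) + lammax • (HΩ x - HΩ y) := by
      simp only [hHdef, smul_sub]; abel
    calc ‖H x - H y‖ ≤ ‖Hf x - Hf y‖ + ‖lammax • (HΩ x - HΩ y)‖ := by
          rw [heq]; exact norm_add_le _ _
      _ = ‖Hf x - Hf y‖ + lammax * ‖HΩ x - HΩ y‖ := by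
          rw [norm_smul lammax (HΩ x - HΩ y), Real.norm_eq_abs, abs_of_pos hlammax]
      _ ≤ L * ‖x - y‖ + lammax * (L * ‖x - y‖) := by
          have := hLipHΩ x y
          have := hLipHf x y
          nlinarith [hLipHΩ x y, hLipHf x y, hlammax.le]
      _ = M * ‖x - y‖ := by ring
  -- Taylor bound via ODE comparison
  have key : ‖G x₀ - G xΩ - (H xΩ) v‖ ≤ M * ‖v‖ ^ 2 / 2 := by
    set φ : ℝ → Euc p := fun t => G (xΩ + t • v) - G xΩ - t • ((H xΩ) v) with hφ
    have hφ' : ∀ t : ℝ, HasDerivAt φ ((H (xΩ + t • v)) v - (H xΩ) v) t := by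
      intro t
      have h1 : HasDerivAt (fun s : ℝ => xΩ + s • v) v t := by
        simpa using ((hasDerivAt_id t).smul_const v).const_add xΩ
      have h2 : HasDerivAt (fun s : ℝ => G (xΩ + s • v)) ((H (xΩ + t • v)) v) t :=
        by have := (hHG (xΩ + t • v)).comp_hasDerivAt t h1; exact this
      have h3 : HasDerivAt (fun s : ℝ => s • ((H xΩ) v)) ((H xΩ) v) t := by
        simpa using (hasDerivAt_id t).smul_const ((H xΩ) v)
      exact (h2.sub_const (G xΩ)).sub h3
    have hB : ∀ t : ℝ, HasDerivAt (fun s : ℝ => M * ‖v‖ ^ 2 / 2 * s ^ 2)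
        (M * ‖v‖ ^ 2 * t) t := by
      intro t
      have := (hasDerivAt_pow 2 t).const_mul (M * ‖v‖ ^ 2 / 2)
      refine this.congr_deriv ?_
      simp; ring
    have bound : ∀ t ∈ Set.Ico (0 : ℝ) 1,
        ‖(H (xΩ + t • v)) v - (H xΩ) v‖ ≤ M * ‖v‖ ^ 2 * t := by
      intro t ht
      have h1 : (H (xΩ + t • v)) v - (H xΩ) v = (H (xΩ + t • v) - H xΩ) v :=
        (ContinuousLinearMap.sub_apply _ _ _).symm
      calc ‖(H (xΩ + t • v)) v - (H xΩ) v‖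
          ≤ ‖H (xΩ + t • v) - H xΩ‖ * ‖v‖ := by
            rw [h1]; exact (H (xΩ + t • v) - H xΩ).le_opNorm v
        _ ≤ (M * ‖xΩ + t • v - xΩ‖) * ‖v‖ := by
            have := hLipH (xΩ + t • v) xΩ
            nlinarith [norm_nonneg v, hLipH (xΩ + t • v) xΩ,
              (H (xΩ + t • v) - H xΩ).le_opNorm v]
        _ = M * ‖v‖ ^ 2 * t := by
            have : ‖xΩ + t • v - xΩ‖ = t * ‖v‖ := by
              rw [add_sub_cancel_left, norm_smul, Real.norm_eq_abs, abs_of_nonneg ht.1]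
            rw [this]; ring
    have h01 : (1 : ℝ) ∈ Set.Icc (0 : ℝ) 1 := by norm_num
    have := image_norm_le_of_norm_deriv_right_le_deriv_boundary
      (f := φ) (a := 0) (b := 1)
      (fun t _ => (hφ' t).continuousAt.continuousWithinAt)
      (fun t _ => (hφ' t).hasDerivWithinAt.mono (Set.Ici_subset_Ici.2 le_rfl))
      (by simp [hφ]) hB
      (fun t ht => bound t ht) h01
    have hφ1 : φ 1 = G x₀ - G xΩ - (H xΩ) v := by
      simp [hφ, hv]
    rw [hφ1] at this
    calc ‖G x₀ - G xΩ - (H xΩ) v‖ ≤ M * ‖v‖ ^ 2 / 2 * 1 ^ 2 := this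
      _ = M * ‖v‖ ^ 2 / 2 := by ring
  -- simplify using gΩ xΩ = 0 and the Newton equation
  have hGxΩ : G xΩ = gf xΩ := by simp [hG, hgΩ0]
  have hHv : (H xΩ) v = -(gf xΩ) := hx₀
  have key2 : ‖G x₀‖ ≤ M * ‖v‖ ^ 2 / 2 := by
    have : G x₀ - G xΩ - (H xΩ) v = G x₀ := by
      rw [hGxΩ, hHv]; abel
    rwa [this] at key
  -- strong convexity lower bound
  have hsc : m * ‖v‖ ^ 2 ≤ ‖v‖ * ‖gf xΩ‖ := by
    have h1 : m * ‖v‖ ^ 2 ≤ @inner ℝ _ _ v ((H xΩ) v) := by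
      have hf' := hscf xΩ v
      have hΩ' := hscΩ xΩ v
      have : @inner ℝ _ _ v ((H xΩ) v)
          = @inner ℝ _ _ v (Hf xΩ v) + lammax * @inner ℝ _ _ v (HΩ xΩ v) := by
        simp [hHdef, inner_add_right, inner_smul_right]
      rw [this, hm]
      nlinarith [hlammax.le]
    have h2 : @inner ℝ _ _ v ((H xΩ) v) ≤ ‖v‖ * ‖(H xΩ) v‖ :=
      real_inner_le_norm v _
    have h3 : ‖(H xΩ) v‖ = ‖gf xΩ‖ := by rw [hHv, norm_neg]
    rw [h3] at h2
    linarith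
  by_cases hv0 : v = 0
  · -- then gf xΩ = 0 and the RHS is 0; also ‖G x₀‖ ≤ 0
    have hg0 : gf xΩ = 0 := by
      have := hHv
      rw [hv0] at this
      simp at this
      simpa using this
    have : ‖G x₀‖ ≤ 0 := by
      have := key2; rw [hv0] at this; simpa using this
    have hGnn : 0 ≤ ‖G x₀‖ := norm_nonneg _
    rw [hg0]
    simp only [norm_zero]
    calc ‖gf x₀ + lammax • gΩ x₀‖ = ‖G x₀‖ := rfl
      _ ≤ 0 := this
      _ ≤ M * 0 ^ 2 / (2 * m ^ 2) := by simp
      _ = L * (1 + lammax) * 0 ^ 2 / (2 * m ^ 2) := by rw [hM]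
  · -- v ≠ 0 : get L ≥ 0 and ‖v‖ ≤ ‖gf xΩ‖ / m
    have hvpos : 0 < ‖v‖ := norm_pos_iff.2 hv0
    have hL0 : 0 ≤ L := by
      have h := hLipHf x₀ xΩ
      have hnn : (0 : ℝ) ≤ ‖Hf x₀ - Hf xΩ‖ := norm_nonneg _
      nlinarith
    have hM0 : 0 ≤ M := by rw [hM]; positivity
    have hvle : ‖v‖ ≤ ‖gf xΩ‖ / m := by
      rw [le_div_iff₀ hm0]
      nlinarith
    calc ‖gf x₀ + lammax • gΩ x₀‖ = ‖G x₀‖ := rfl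
      _ ≤ M * ‖v‖ ^ 2 / 2 := key2
      _ ≤ M * (‖gf xΩ‖ / m) ^ 2 / 2 := by
          have h2 : ‖v‖ ^ 2 ≤ (‖gf xΩ‖ / m) ^ 2 := by
            apply sq_le_sq' _ hvle
            linarith [norm_nonneg v]
          nlinarith
      _ = M * ‖gf xΩ‖ ^ 2 / (2 * m ^ 2) := by
          rw [div_pow, ← mul_div_assoc, div_div, mul_comm (m ^ 2) 2]
      _ = L * (1 + lammax) * ‖gf xΩ‖ ^ 2 / (2 * m ^ 2) := by rw [hM]
end

section
/- Suppose f, Ω: ℝ^p → ℝ have L-Lipschitz Hessians and, for points x_k, x_{k+1} with λ ∈ [λ_{k+1}, λ_k] ⊂ (0, ∞) and x = αx_k + (1−α)x_{k+1} where α = (λ − λ_{k+1})/(λ_k − λ_{k+1}), the interpolated gradient error satisfies: ‖λ∇Ω(x) − αλ_k∇Ω(x_k) − (1−α)λ_{k+1}∇Ω(x_{k+1})‖ ≤ (λL/8)‖x_{k+1} − x_k‖² + ((λ_k − λ_{k+1})/4)·‖∇Ω(x_{k+1}) − ∇Ω(x_k)‖. -/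
/-- First-order Taylor bound for a map with Lipschitz derivative. -/
lemma taylor1 {p : ℕ} {L : ℝ} (g : Euc p → Euc p) (H : Euc p → (Euc p →L[ℝ] Euc p))
    (hH : ∀ x, HasFDerivAt g (H x) x)
    (hLip : ∀ x y, ‖H x - H y‖ ≤ L * ‖x - y‖) (x y : Euc p) :
    ‖g y - g x - H x (y - x)‖ ≤ L / 2 * ‖y - x‖ ^ 2 := by
  rcases eq_or_ne y x with rfl | hne
  · simp
  have hdpos : 0 < ‖y - x‖ := norm_sub_pos_iff.2 hne
  have hL : 0 ≤ L := by
    have h1 := hLip y x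
    nlinarith [norm_nonneg (H y - H x)]
  set d := y - x with hd
  have hHcont : Continuous H := by
    have : LipschitzWith ⟨|L|, abs_nonneg L⟩ H := by
      apply LipschitzWith.of_dist_le_mul
      intro a b
      simp only [dist_eq_norm]
      exact (hLip a b).trans (mul_le_mul_of_nonneg_right (le_abs_self L) (norm_nonneg _))
    exact this.continuous
  have hline : ∀ t : ℝ, HasDerivAt (fun t : ℝ => x + t • d) d t := by
    intro t
    simpa using ((hasDerivAt_id t).smul_const d).const_add x
  have hψ : ∀ t : ℝ, HasDerivAt (fun t : ℝ => g (x + t • d) - t • (H x) d)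
      ((H (x + t • d)) d - (H x) d) t := by
    intro t
    have := ((hH _).comp_hasDerivAt t (hline t)).sub ((hasDerivAt_id t).smul_const ((H x) d))
    rw [one_smul] at this
    exact this
  have hcont : Continuous fun t : ℝ => (H (x + t • d)) d - (H x) d := by
    have h1 : Continuous fun t : ℝ => H (x + t • d) :=
      hHcont.comp (continuous_const.add (continuous_id.smul continuous_const))
    exact (h1.clm_apply continuous_const).sub continuous_const
  have hInt : IntervalIntegrable (fun t : ℝ => (H (x + t • d)) d - (H x) d)
      MeasureTheory.volume 0 1 := hcont.intervalIntegrable 0 1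
  have hftc : ∫ t in (0:ℝ)..1, ((H (x + t • d)) d - (H x) d)
      = (g (x + (1:ℝ) • d) - (1:ℝ) • (H x) d) - (g (x + (0:ℝ) • d) - (0:ℝ) • (H x) d) :=
    intervalIntegral.integral_eq_sub_of_hasDerivAt (fun t _ => hψ t) hInt
  have hx1 : x + (1:ℝ) • d = y := by rw [hd]; module
  have hx0 : x + (0:ℝ) • d = x := by module
  rw [hx1, hx0] at hftc
  simp only [one_smul, zero_smul, sub_zero] at hftc
  have heq : g y - g x - (H x) (y - x) = ∫ t in (0:ℝ)..1, ((H (x + t • d)) d - (H x) d) := by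
    rw [hftc, ← hd]; abel
  rw [heq]
  have hb : ∀ t ∈ Set.Icc (0:ℝ) 1, ‖(H (x + t • d)) d - (H x) d‖ ≤ L * t * ‖d‖ ^ 2 := by
    intro t ht
    have h2 : (H (x + t • d)) d - (H x) d = (H (x + t • d) - H x) d := by
      simp [ContinuousLinearMap.sub_apply]
    rw [h2]
    calc ‖(H (x + t • d) - H x) d‖ ≤ ‖H (x + t • d) - H x‖ * ‖d‖ :=
          ContinuousLinearMap.le_opNorm _ _
      _ ≤ (L * ‖x + t • d - x‖) * ‖d‖ :=
          mul_le_mul_of_nonneg_right (hLip _ _) (norm_nonneg _)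
      _ = L * t * ‖d‖ ^ 2 := by
          rw [show x + t • d - x = t • d by abel, norm_smul, Real.norm_eq_abs,
            abs_of_nonneg ht.1]
          ring
  have hval : ∫ t in (0:ℝ)..1, (L * t * ‖d‖ ^ 2) = L / 2 * ‖d‖ ^ 2 := by
    rw [show (fun t : ℝ => L * t * ‖d‖ ^ 2) = fun t : ℝ => (L * ‖d‖ ^ 2) * t by
      funext t; ring]
    rw [intervalIntegral.integral_const_mul, integral_id]
    ring
  calc ‖∫ t in (0:ℝ)..1, ((H (x + t • d)) d - (H x) d)‖
      ≤ |∫ t in (0:ℝ)..1, (L * t * ‖d‖ ^ 2)| := by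
        apply intervalIntegral.norm_integral_le_abs_of_norm_le
        · filter_upwards [MeasureTheory.ae_restrict_mem measurableSet_uIoc] with t ht
          rw [Set.uIoc_of_le (by norm_num : (0:ℝ) ≤ 1)] at ht
          exact hb t ⟨ht.1.le, ht.2⟩
        · exact Continuous.intervalIntegrable
            ((continuous_const.mul continuous_id).mul continuous_const) 0 1
    _ = L / 2 * ‖d‖ ^ 2 := by
        rw [hval, abs_of_nonneg (by positivity)]

set_option maxHeartbeats 1000000 in
/-- Interpolation error for the regularizer term: with α = (λ−λ_{k+1})/(λ_k−λ_{k+1}),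
x = αx_k + (1−α)x_{k+1}, and Ω having an L-Lipschitz Hessian,
‖λ∇Ω(x) − αλ_k∇Ω(x_k) − (1−α)λ_{k+1}∇Ω(x_{k+1})‖
  ≤ (λL/8)‖x_{k+1}−x_k‖² + ((λ_k−λ_{k+1})/4)‖∇Ω(x_{k+1})−∇Ω(x_k)‖. -/
theorem stmt_19 {p : ℕ} {L lamk lamk1 lam : ℝ}
    (f Ω : Euc p → ℝ) (gf gΩ : Euc p → Euc p) (Hf HΩ : Euc p → (Euc p →L[ℝ] Euc p))
    (hgf : ∀ x, HasGradientAt f (gf x) x) (hgΩ : ∀ x, HasGradientAt Ω (gΩ x) x)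
    (hHf : ∀ x, HasFDerivAt gf (Hf x) x) (hHΩ : ∀ x, HasFDerivAt gΩ (HΩ x) x)
    (hLipHf : ∀ x y, ‖Hf x - Hf y‖ ≤ L * ‖x - y‖)
    (hLipHΩ : ∀ x y, ‖HΩ x - HΩ y‖ ≤ L * ‖x - y‖)
    (hlamk1 : 0 < lamk1) (hlt : lamk1 < lamk) (hlam : lam ∈ Set.Icc lamk1 lamk)
    (xk xk1 : Euc p) :
    ‖lam • gΩ (((lam - lamk1) / (lamk - lamk1)) • xk
          + (1 - (lam - lamk1) / (lamk - lamk1)) • xk1)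
        - (((lam - lamk1) / (lamk - lamk1)) * lamk) • gΩ xk
        - ((1 - (lam - lamk1) / (lamk - lamk1)) * lamk1) • gΩ xk1‖
      ≤ lam * L / 8 * ‖xk1 - xk‖ ^ 2 + (lamk - lamk1) / 4 * ‖gΩ xk1 - gΩ xk‖ := by
  obtain ⟨hl1, hl2⟩ := hlam
  have hden : 0 < lamk - lamk1 := sub_pos.2 hlt
  set α := (lam - lamk1) / (lamk - lamk1) with hαdef
  have hα0 : 0 ≤ α := div_nonneg (by linarith) hden.le
  have hα1 : α ≤ 1 := (div_le_one hden).2 (by linarith)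
  have hαmul : α * (lamk - lamk1) = lam - lamk1 := div_mul_cancel₀ _ hden.ne'
  clear_value α
  have hlam_eq : lam = α * lamk + (1 - α) * lamk1 := by linear_combination -hαmul
  have hlampos : 0 < lam := lt_of_lt_of_le hlamk1 hl1
  set x := α • xk + (1 - α) • xk1 with hxdef
  have he1 := taylor1 gΩ HΩ hHΩ hLipHΩ x xk
  have he2 := taylor1 gΩ HΩ hHΩ hLipHΩ x xk1
  set e1 := gΩ xk - gΩ x - HΩ x (xk - x) with he1def
  set e2 := gΩ xk1 - gΩ x - HΩ x (xk1 - x) with he2def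
  have hxk : xk - x = (1 - α) • (xk - xk1) := by rw [hxdef]; module
  have hxk1 : xk1 - x = α • (xk1 - xk) := by rw [hxdef]; module
  have hn1 : ‖xk - x‖ = (1 - α) * ‖xk1 - xk‖ := by
    rw [hxk, norm_smul, Real.norm_eq_abs, abs_of_nonneg (by linarith), norm_sub_rev]
  have hn2 : ‖xk1 - x‖ = α * ‖xk1 - xk‖ := by
    rw [hxk1, norm_smul, Real.norm_eq_abs, abs_of_nonneg hα0]
  rw [hn1] at he1
  rw [hn2] at he2
  have hzero : α • (xk - x) + (1 - α) • (xk1 - x) = 0 := by rw [hxdef]; module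
  have hmap : α • (HΩ x) (xk - x) + (1 - α) • (HΩ x) (xk1 - x) = 0 := by
    rw [← map_smul, ← map_smul, ← map_add, hzero, map_zero]
  have hEdecomp : gΩ x - α • gΩ xk - (1 - α) • gΩ xk1 = -(α • e1) - (1 - α) • e2 := by
    have h3 : -(α • e1) - (1 - α) • e2
        = gΩ x - α • gΩ xk - (1 - α) • gΩ xk1
          + (α • (HΩ x) (xk - x) + (1 - α) • (HΩ x) (xk1 - x)) := by
      rw [he1def, he2def]; module
    rw [h3, hmap, add_zero]
  have hEnorm : ‖gΩ x - α • gΩ xk - (1 - α) • gΩ xk1‖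
      ≤ L / 2 * (α * (1 - α)) * ‖xk1 - xk‖ ^ 2 := by
    rw [hEdecomp]
    have h4 : ‖-(α • e1) - (1 - α) • e2‖ ≤ α * ‖e1‖ + (1 - α) * ‖e2‖ := by
      calc ‖-(α • e1) - (1 - α) • e2‖ ≤ ‖-(α • e1)‖ + ‖(1 - α) • e2‖ := norm_sub_le _ _
        _ = α * ‖e1‖ + (1 - α) * ‖e2‖ := by
            rw [norm_neg, norm_smul, norm_smul, Real.norm_eq_abs, Real.norm_eq_abs,
              abs_of_nonneg hα0, abs_of_nonneg (by linarith)]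
    nlinarith [mul_le_mul_of_nonneg_left he1 hα0,
      mul_le_mul_of_nonneg_left he2 (by linarith : (0:ℝ) ≤ 1 - α)]
  have hdecomp : lam • gΩ x - (α * lamk) • gΩ xk - ((1 - α) * lamk1) • gΩ xk1
      = lam • (gΩ x - α • gΩ xk - (1 - α) • gΩ xk1)
        + (α * (1 - α) * (lamk - lamk1)) • (gΩ xk1 - gΩ xk) := by
    rw [hlam_eq]; module
  rw [hdecomp]
  have hLd : 0 ≤ L * ‖xk1 - xk‖ := le_trans (norm_nonneg _) (hLipHΩ xk1 xk)
  have hΔ : 0 ≤ ‖gΩ xk1 - gΩ xk‖ := norm_nonneg _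
  calc ‖lam • (gΩ x - α • gΩ xk - (1 - α) • gΩ xk1)
        + (α * (1 - α) * (lamk - lamk1)) • (gΩ xk1 - gΩ xk)‖
      ≤ ‖lam • (gΩ x - α • gΩ xk - (1 - α) • gΩ xk1)‖
        + ‖(α * (1 - α) * (lamk - lamk1)) • (gΩ xk1 - gΩ xk)‖ := norm_add_le _ _
    _ = lam * ‖gΩ x - α • gΩ xk - (1 - α) • gΩ xk1‖
        + (α * (1 - α) * (lamk - lamk1)) * ‖gΩ xk1 - gΩ xk‖ := by
        rw [norm_smul, norm_smul, Real.norm_eq_abs, Real.norm_eq_abs,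
          abs_of_pos hlampos, abs_of_nonneg (by nlinarith)]
    _ ≤ lam * L / 8 * ‖xk1 - xk‖ ^ 2 + (lamk - lamk1) / 4 * ‖gΩ xk1 - gΩ xk‖ := by
        have t1 : lam * ‖gΩ x - α • gΩ xk - (1 - α) • gΩ xk1‖
            ≤ lam * L / 8 * ‖xk1 - xk‖ ^ 2 := by
          have h5 := mul_le_mul_of_nonneg_left hEnorm hlampos.le
          nlinarith [mul_nonneg (mul_nonneg hlampos.le hLd) (norm_nonneg (xk1 - xk)),
            sq_nonneg (1 - 2 * α)]
        have t2 : (α * (1 - α) * (lamk - lamk1)) * ‖gΩ xk1 - gΩ xk‖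
            ≤ (lamk - lamk1) / 4 * ‖gΩ xk1 - gΩ xk‖ := by
          nlinarith [mul_nonneg hden.le hΔ, sq_nonneg (1 - 2 * α)]
        linarith
end
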